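/- Let N be a full triangulated subcategory of a proper k-linear triangulated category T. If N is both right saturated and left saturated (every cohomological functor from N^op, respectively from N, to finite-dimensional vector spaces is representable, respectively corepresentable), then N is admissible in T: the inclusion N ↪ T admits both a right and a left adjoint. -/

import Mathlib

open CategoryTheory Limits Pretriangulated ZeroObject

universe v u

variable {k : Type u} [Field k] {T : Type u} [Category.{v} T] [Preadditive T] [Linear k T]
  [HasZeroObject T] [HasShift T ℤ] [∀ n : ℤ, (CategoryTheory.shiftFunctor T n).Additive]
  [Pretriangulated T]

/-- A class of objects of `T` forming a full triangulated subcategory: closed under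
isomorphisms, containing zero, closed under shifts and extensions. -/
structure IsTriangulatedSet (P : Set T) : Prop where
  isoClosed : ∀ {X Y : T}, (X ≅ Y) → X ∈ P → Y ∈ P
  zero : (0 : T) ∈ P
  shift : ∀ (X : T) (n : ℤ), X ∈ P → X⟦n⟧ ∈ P
  ext₂ : ∀ (Tr : Triangle T), Tr ∈ (distTriang T) → Tr.obj₁ ∈ P → Tr.obj₃ ∈ P →
    Tr.obj₂ ∈ P

variable (S : Set T)

/-- A morphism of `T` between objects of `S`, viewed in the full subcategory. -/
def liftHom {X Y : T} (hX : X ∈ S) (hY : Y ∈ S) (f : X ⟶ Y) :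
    (⟨X, hX⟩ : ObjectProperty.FullSubcategory (· ∈ S)) ⟶ ⟨Y, hY⟩ := ObjectProperty.homMk f

/-- A contravariant functor `H : N^op ⥤ Vect k` on the full subcategory `N` on `S` is
cohomological if it sends every distinguished triangle (with objects in `S`) to an
exact sequence `H(Z) → H(Y) → H(X)`. -/
def IsCohomologicalContra (H : (ObjectProperty.FullSubcategory (· ∈ S))ᵒᵖ ⥤ ModuleCat k) : Prop :=
  ∀ (Tr : Triangle T), Tr ∈ (distTriang T) → ∀ (h1 : Tr.obj₁ ∈ S) (h2 : Tr.obj₂ ∈ S)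
    (h3 : Tr.obj₃ ∈ S),
    Function.Exact (H.map (liftHom S h2 h3 Tr.mor₂).op) (H.map (liftHom S h1 h2 Tr.mor₁).op)

/-- A covariant functor `H : N ⥤ Vect k` is (co)homological if it sends every
distinguished triangle (with objects in `S`) to an exact sequence `H(X) → H(Y) → H(Z)`. -/
def IsCohomologicalCo (H : ObjectProperty.FullSubcategory (· ∈ S) ⥤ ModuleCat k) : Prop :=
  ∀ (Tr : Triangle T), Tr ∈ (distTriang T) → ∀ (h1 : Tr.obj₁ ∈ S) (h2 : Tr.obj₂ ∈ S)
    (h3 : Tr.obj₃ ∈ S),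
    Function.Exact (H.map (liftHom S h1 h2 Tr.mor₁)) (H.map (liftHom S h2 h3 Tr.mor₂))

/-- Let `N ⊆ T` be a full triangulated subcategory of a proper `k`-linear triangulated
category `T`.  If `N` is right saturated (every cohomological functor `N^op → vect k`
with finite-dimensional values is representable) and left saturated (dually), then `N`
is admissible: the inclusion `N ↪ T` admits a right adjoint and a left adjoint. -/
theorem admissible_of_saturated
    -- properness of `T`: `⊕_m Hom(X, Y[m])` is finite-dimensional for all `X, Y`
    (hproper₁ : ∀ X Y : T, FiniteDimensional k (X ⟶ Y))
    (hproper₂ : ∀ X Y : T, {m : ℤ | ¬ Subsingleton (X ⟶ Y⟦m⟧)}.Finite)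
    (hS : IsTriangulatedSet S)
    -- `N` is right saturated
    (hright : ∀ H : (ObjectProperty.FullSubcategory (· ∈ S))ᵒᵖ ⥤ ModuleCat k, H.Additive →
      IsCohomologicalContra S H → (∀ X, FiniteDimensional k (H.obj X)) →
      ∃ Y : ObjectProperty.FullSubcategory (· ∈ S),
        Nonempty (H ≅ (linearYoneda k (ObjectProperty.FullSubcategory (· ∈ S))).obj Y))
    -- `N` is left saturated
    (hleft : ∀ H : ObjectProperty.FullSubcategory (· ∈ S) ⥤ ModuleCat k, H.Additive →
      IsCohomologicalCo S H → (∀ X, FiniteDimensional k (H.obj X)) →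
      ∃ Y : ObjectProperty.FullSubcategory (· ∈ S),
        Nonempty (H ≅ (linearCoyoneda k (ObjectProperty.FullSubcategory (· ∈ S))).obj (Opposite.op Y))) :
    (∃ q : T ⥤ ObjectProperty.FullSubcategory (· ∈ S), Nonempty (ObjectProperty.ι (· ∈ S) ⊣ q)) ∧
    (∃ p : T ⥤ ObjectProperty.FullSubcategory (· ∈ S), Nonempty (p ⊣ ObjectProperty.ι (· ∈ S))) := by
  classical
  constructor
  · -- right adjoint
    have key : ∀ X : T, ∃ Y : ObjectProperty.FullSubcategory (· ∈ S),
        Nonempty ((ObjectProperty.ι (· ∈ S)).op ⋙ (linearYoneda k T).obj X ≅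
          (linearYoneda k (ObjectProperty.FullSubcategory (· ∈ S))).obj Y) := by
      intro X
      refine hright _ inferInstance ?_ (fun n => hproper₁ n.unop.obj X)
      intro Tr hTr h1 h2 h3 φ
      constructor
      · intro hφ
        obtain ⟨ψ, hψ⟩ := Pretriangulated.Triangle.yoneda_exact₂ Tr hTr φ hφ
        exact ⟨ψ, hψ.symm⟩
      · rintro ⟨ψ, rfl⟩
        show Tr.mor₁ ≫ (Tr.mor₂ ≫ ψ) = 0
        exact (Category.assoc Tr.mor₁ Tr.mor₂ (ψ : Tr.obj₃ ⟶ X)).symm.trans (by rw [comp_distTriang_mor_zero₁₂ Tr hTr]; exact Limits.zero_comp)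
    choose G hG using key
    let e : ∀ X : T, ((ObjectProperty.ι (· ∈ S)).op ⋙ (linearYoneda k T).obj X ≅
        (linearYoneda k (ObjectProperty.FullSubcategory (· ∈ S))).obj (G X)) := fun X => (hG X).some
    let E : ∀ (n : ObjectProperty.FullSubcategory (· ∈ S)) (X : T),
        ((ObjectProperty.ι (· ∈ S)).obj n ⟶ X) ≃ (n ⟶ G X) :=
      fun n X => ((e X).app (Opposite.op n)).toLinearEquiv.toEquiv
    have he : ∀ (n' n : ObjectProperty.FullSubcategory (· ∈ S)) (X : T) (f : n' ⟶ n)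
        (g : (ObjectProperty.ι (· ∈ S)).obj n ⟶ X),
        E n' X ((ObjectProperty.ι (· ∈ S)).map f ≫ g) = f ≫ E n X g := by
      intro n' n X f g
      have h := NatTrans.naturality (e X).hom f.op
      exact ConcreteCategory.congr_hom h g
    exact ⟨Adjunction.rightAdjointOfEquiv E he, ⟨Adjunction.adjunctionOfEquivRight E he⟩⟩
  · -- left adjoint
    have key : ∀ X : T, ∃ Y : ObjectProperty.FullSubcategory (· ∈ S),
        Nonempty (ObjectProperty.ι (· ∈ S) ⋙ (linearCoyoneda k T).obj (Opposite.op X) ≅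
          (linearCoyoneda k (ObjectProperty.FullSubcategory (· ∈ S))).obj (Opposite.op Y)) := by
      intro X
      refine hleft _ inferInstance ?_ (fun n => hproper₁ X n.obj)
      intro Tr hTr h1 h2 h3 φ
      constructor
      · intro hφ
        obtain ⟨ψ, hψ⟩ := Pretriangulated.Triangle.coyoneda_exact₂ Tr hTr φ hφ
        exact ⟨ψ, hψ.symm⟩
      · rintro ⟨ψ, rfl⟩
        show (ψ ≫ Tr.mor₁) ≫ Tr.mor₂ = 0
        exact (Category.assoc (ψ : X ⟶ Tr.obj₁) Tr.mor₁ Tr.mor₂).trans (by rw [comp_distTriang_mor_zero₁₂ Tr hTr]; exact Limits.comp_zero)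
    choose G hG using key
    let e : ∀ X : T, (ObjectProperty.ι (· ∈ S) ⋙ (linearCoyoneda k T).obj
        (Opposite.op X) ≅
        (linearCoyoneda k (ObjectProperty.FullSubcategory (· ∈ S))).obj (Opposite.op (G X))) :=
      fun X => (hG X).some
    let E : ∀ (X : T) (n : ObjectProperty.FullSubcategory (· ∈ S)),
        (G X ⟶ n) ≃ (X ⟶ (ObjectProperty.ι (· ∈ S)).obj n) :=
      fun X n => ((e X).app n).toLinearEquiv.toEquiv.symm
    have he : ∀ (X : T) (n n' : ObjectProperty.FullSubcategory (· ∈ S)) (g : n ⟶ n') (h : G X ⟶ n),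
        E X n' (h ≫ g) = E X n h ≫ (ObjectProperty.ι (· ∈ S)).map g := by
      intro X n n' g h
      have hnat := NatTrans.naturality (e X).inv g
      exact ConcreteCategory.congr_hom hnat h
    exact ⟨Adjunction.leftAdjointOfEquiv E he, ⟨Adjunction.adjunctionOfEquivLeft E he⟩⟩
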